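/- Let V_1, V_2, ... be i.i.d. random variables taking values -1 and 1 with probability 1/2 each, let S_n = V_1 + ... + V_n (S_0 = 0), and let R_n = (1 + S_{n-1} + S_n)/2 be the edge traversed at step n. Define M_n^+ = max{R_1, ..., R_n}. Then for every integer n ≥ 1 and every integer m ≥ 0, P[M_n^+ = m] = 2^(-n) · C(n, ⌊(n-m)/2⌋), where C(n,k) denotes the binomial coefficient with the convention C(n,k) = 0 if k < 0 or k > n. -/

import Mathlib

open MeasureTheory ProbabilityTheory

namespace RWmax


/-- max of prefix sums of a step list -/
def f : List ℤ → ℤ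
  | [] => 0
  | x :: l => max 0 (x + f l)

lemma f_nil : f [] = 0 := rfl
lemma f_cons (x : ℤ) (l : List ℤ) : f (x :: l) = max 0 (x + f l) := rfl

lemma f_nonneg (l : List ℤ) : 0 ≤ f l := by
  cases l <;> simp [f]

lemma f_append (l : List ℤ) (x : ℤ) : f (l ++ [x]) = max (f l) (l.sum + x) := by
  induction l with
  | nil => simp [f]
  | cons y l ih =>
    simp only [List.cons_append, f_cons, ih, List.sum_cons]
    rw [max_comm (f l), ← max_add_add_left, max_assoc, max_comm (y + f l), ← max_assoc]
    ring_nf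
    exact max_assoc 0 _ _

/-- step list of a boolean vector -/
def steps {n : ℕ} (b : Fin n → Bool) : List ℤ := List.ofFn (fun i => if b i then 1 else -1)

lemma steps_zero (b : Fin 0 → Bool) : steps b = [] := by simp [steps]

lemma steps_cons {n : ℕ} (x : Bool) (b : Fin n → Bool) :
    steps (Fin.cons x b) = (if x then (1:ℤ) else -1) :: steps b := by
  simp [steps, List.ofFn_succ]

def cnt (n : ℕ) (m : ℤ) : ℕ :=
  (Finset.univ.filter fun b : Fin n → Bool => f (steps b) = m).card

lemma cnt_neg (n : ℕ) {m : ℤ} (hm : m < 0) : cnt n m = 0 := by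
  rw [cnt, Finset.card_eq_zero, Finset.filter_eq_empty_iff]
  intro b _
  intro h
  have := f_nonneg (steps b)
  omega

lemma cnt_zero (m : ℤ) : cnt 0 m = if m = 0 then 1 else 0 := by
  rcases eq_or_ne m 0 with h | h
  · subst h
    simp only [cnt, if_pos rfl]
    have : ∀ b : Fin 0 → Bool, f (steps b) = 0 := fun b => by rw [steps_zero]; rfl
    rw [Finset.filter_true_of_mem (fun b _ => this b)]
    simp
  · rw [if_neg h, cnt, Finset.card_eq_zero, Finset.filter_eq_empty_iff]
    intro b _
    rw [steps_zero]
    exact fun hh => h (hh.symm.trans rfl)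

lemma cnt_succ (n : ℕ) (m : ℤ) :
    cnt (n+1) m =
      (Finset.univ.filter fun b : Fin n → Bool => max 0 (1 + f (steps b)) = m).card
      + (Finset.univ.filter fun b : Fin n → Bool => max 0 (-1 + f (steps b)) = m).card := by
  rw [cnt, Finset.card_filter,
    ← Equiv.sum_comp (Fin.consEquiv (fun _ => Bool)), Fintype.sum_prod_type, Fintype.sum_bool,
    Finset.card_filter, Finset.card_filter]
  congr 1
  · exact Finset.sum_congr rfl fun y _ => by simp [Fin.consEquiv, steps_cons, f_cons]
  · exact Finset.sum_congr rfl fun y _ => by simp [Fin.consEquiv, steps_cons, f_cons]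

lemma cnt_succ_pos (n : ℕ) (m : ℤ) (hm : 1 ≤ m) :
    cnt (n+1) m = cnt n (m - 1) + cnt n (m + 1) := by
  rw [cnt_succ, cnt, cnt]
  congr 1
  · congr 1
    apply Finset.filter_congr
    intro b _
    have := f_nonneg (steps b)
    constructor <;> intro h <;> omega
  · congr 1
    apply Finset.filter_congr
    intro b _
    have := f_nonneg (steps b)
    constructor <;> intro h <;> omega

lemma cnt_succ_zero (n : ℕ) :
    cnt (n+1) 0 = cnt n 0 + cnt n 1 := by
  rw [cnt_succ]
  have h1 : (Finset.univ.filter fun b : Fin n → Bool => max 0 (1 + f (steps b)) = 0).card = 0 := by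
    rw [Finset.card_eq_zero, Finset.filter_eq_empty_iff]
    intro b _
    have := f_nonneg (steps b); omega
  rw [h1, Nat.zero_add, cnt, cnt]
  have key : (Finset.univ.filter fun b : Fin n → Bool => max 0 (-1 + f (steps b)) = 0)
      = (Finset.univ.filter fun b : Fin n → Bool => f (steps b) = 0 ∨ f (steps b) = 1) := by
    apply Finset.filter_congr
    intro b _
    have := f_nonneg (steps b)
    constructor <;> intro h <;> omega
  rw [key, Finset.filter_or, Finset.card_union_of_disjoint]
  rw [Finset.disjoint_filter]
  intro b _ h0 h1
  omega

/-- target formula -/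
def tgt (n m : ℕ) : ℕ := if n < m then 0 else n.choose ((n - m) / 2)

lemma main_cnt : ∀ n m : ℕ, cnt n (m : ℤ) = tgt n m := by
  intro n
  induction n with
  | zero =>
    intro m
    rw [cnt_zero, tgt]
    rcases Nat.eq_zero_or_pos m with h | h
    · subst h; simp
    · rw [if_neg (by omega), if_pos h]
  | succ n ih =>
    intro m
    have i0 : cnt n 0 = tgt n 0 := by simpa using ih 0
    have i1 : cnt n 1 = tgt n 1 := by simpa using ih 1
    rcases Nat.eq_zero_or_pos m with h | h
    · subst h
      rw [Nat.cast_zero, cnt_succ_zero, i0, i1]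
      rw [tgt, tgt, tgt, if_neg (by omega)]
      rcases Nat.eq_zero_or_pos n with h | h
      · subst h; simp
      · rw [if_neg (by omega), if_neg (by omega)]
        simp only [Nat.sub_zero]
        rcases Nat.even_or_odd n with ⟨t, ht⟩ | ⟨t, ht⟩
        · -- n = 2t even, t ≥ 1
          subst ht
          obtain ⟨u, rfl⟩ : ∃ u, t = u + 1 := ⟨t - 1, by omega⟩
          have h2 : (u + 1 + (u + 1) + 1) / 2 = u + 1 := by omega
          have h3 : (u + 1 + (u + 1)) / 2 = u + 1 := by omega
          have h4 : (u + 1 + (u + 1) - 1) / 2 = u := by omega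
          rw [h2, h3, h4]
          have hp := Nat.choose_succ_succ' (u + 1 + (u + 1)) u
          omega
        · -- n = 2t + 1 odd
          subst ht
          have h2 : (2 * t + 1 + 1) / 2 = t + 1 := by omega
          have h3 : (2 * t + 1) / 2 = t := by omega
          have h4 : (2 * t + 1 - 1) / 2 = t := by omega
          rw [h2, h3, h4]
          have hp := Nat.choose_succ_succ' (2 * t + 1) t
          have hsym : (2 * t + 1).choose (2 * t + 1 - t) = (2 * t + 1).choose t :=
            Nat.choose_symm (by omega)
          have h5 : 2 * t + 1 - t = t + 1 := by omega
          rw [h5] at hsym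
          omega
    · obtain ⟨m', rfl⟩ : ∃ m', m = m' + 1 := ⟨m - 1, by omega⟩
      rw [show ((m' + 1 : ℕ) : ℤ) = (m' : ℤ) + 1 by push_cast; ring]
      rw [cnt_succ_pos n _ (by omega)]
      rw [show ((m' : ℤ) + 1 - 1) = ((m' : ℕ) : ℤ) by ring]
      rw [show ((m' : ℤ) + 1 + 1) = ((m' + 2 : ℕ) : ℤ) by push_cast; ring]
      rw [ih m', ih (m' + 2)]
      rw [tgt, tgt, tgt]
      rcases lt_trichotomy n m' with h | h | h
      · rw [if_pos h, if_pos (by omega), if_pos (by omega)]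
      · subst h
        rw [if_neg (by omega), if_pos (by omega), if_neg (by omega)]
        simp
      · rcases eq_or_lt_of_le (Nat.succ_le_of_lt h) with h1 | h1
        · -- n = m' + 1
          rw [if_neg (by omega), if_pos (by omega), if_neg (by omega)]
          have e1 : (n - m') / 2 = 0 := by omega
          have e2 : (n + 1 - (m' + 1)) / 2 = 0 := by omega
          rw [e1, e2]
          simp
        · -- n ≥ m' + 2
          rw [if_neg (by omega), if_neg (by omega), if_neg (by omega)]
          have e2 : (n + 1 - (m' + 1)) / 2 = (n - m') / 2 := by omega
          have e3 : (n - (m' + 2)) / 2 = (n - m') / 2 - 1 := by omega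
          obtain ⟨k, hk⟩ : ∃ k, (n - m') / 2 = k + 1 := ⟨(n - m')/2 - 1, by omega⟩
          rw [e2, e3, hk]
          have hp := Nat.choose_succ_succ' n k
          simp only [Nat.add_sub_cancel]
          omega

def sFun (v : ℕ → ℤ) (n : ℕ) : ℤ := ∑ k ∈ Finset.Icc 1 n, v k

lemma sFun_zero (v : ℕ → ℤ) : sFun v 0 = 0 := by simp [sFun]

lemma sFun_succ (v : ℕ → ℤ) (n : ℕ) : sFun v (n+1) = sFun v n + v (n+1) := by
  rw [sFun, sFun, ← Finset.sum_Icc_succ_top (by omega)]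

lemma sFun_one (v : ℕ → ℤ) : sFun v 1 = v 1 := by
  rw [show (1:ℕ) = 0 + 1 from rfl, sFun_succ, sFun_zero, zero_add]

def L (v : ℕ → ℤ) (n : ℕ) : List ℤ := (List.range n).map fun i => v (i+1)

lemma L_zero (v : ℕ → ℤ) : L v 0 = [] := rfl

lemma L_succ (v : ℕ → ℤ) (n : ℕ) : L v (n+1) = L v n ++ [v (n+1)] := by
  simp [L, List.range_succ]

lemma sum_L (v : ℕ → ℤ) (n : ℕ) : (L v n).sum = sFun v n := by
  induction n with
  | zero => simp [L_zero, sFun_zero]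
  | succ n ih => rw [L_succ, List.sum_append, List.sum_singleton, ih, sFun_succ]

lemma key (v : ℕ → ℤ) (n : ℕ) :
    (∀ k ≤ n, sFun v k ≤ f (L v n)) ∧ (∃ k ≤ n, sFun v k = f (L v n)) := by
  induction n with
  | zero =>
    refine ⟨fun k hk => ?_, 0, le_refl 0, ?_⟩ <;>
      simp_all [Nat.le_zero, L_zero, sFun_zero, f]
  | succ n ih =>
    obtain ⟨hb, k0, hk0n, hk0⟩ := ih
    have hf : f (L v (n+1)) = max (f (L v n)) (sFun v (n+1)) := by
      rw [L_succ, f_append, sum_L, sFun_succ]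
    constructor
    · intro k hk
      rcases Nat.lt_or_ge k (n+1) with h | h
      · exact le_trans (hb k (by omega)) (by rw [hf]; exact le_max_left _ _)
      · have : k = n + 1 := by omega
        subst this
        rw [hf]; exact le_max_right _ _
    · rcases le_total (sFun v (n+1)) (f (L v n)) with h | h
      · exact ⟨k0, by omega, by rw [hf, max_eq_left h, hk0]⟩
      · exact ⟨n+1, le_refl _, by rw [hf, max_eq_right h]⟩

lemma isGreatest_f (v : ℕ → ℤ) (n : ℕ) (hn : 1 ≤ n)
    (hv : ∀ k, 1 ≤ k → k ≤ n → v k = 1 ∨ v k = -1) :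
    IsGreatest ((fun k => max (sFun v (k-1)) (sFun v k)) '' Set.Icc 1 n) (f (L v n)) := by
  obtain ⟨hb, k0, hk0n, hk0⟩ := key v n
  constructor
  · rcases Nat.eq_zero_or_pos k0 with h0 | h0
    · -- f = sFun v 0 = 0; use k = 1, and v 1 must be -1
      have hf0 : f (L v n) = 0 := by
        rw [← hk0, h0, sFun_zero]
      have hv1 : v 1 = -1 := by
        rcases hv 1 le_rfl hn with h | h
        · exfalso
          have := hb 1 hn
          rw [sFun_one, h, hf0] at this
          omega
        · exact h
      refine ⟨1, ⟨le_rfl, hn⟩, ?_⟩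
      simp only [Nat.sub_self, sFun_zero, sFun_one, hv1, hf0]
      rfl
    · refine ⟨k0, ⟨h0, hk0n⟩, ?_⟩
      have h1 : sFun v (k0 - 1) ≤ f (L v n) := hb _ (by omega)
      simp only
      rw [hk0, max_eq_right h1]
  · rintro x ⟨k, ⟨hk1, hkn⟩, rfl⟩
    exact max_le (hb _ (by omega)) (hb _ hkn)
def cB (n : ℕ) (b : Fin n → Bool) (k : ℕ) : ℤ :=
  if h : k - 1 < n then (if b ⟨k - 1, h⟩ then 1 else -1) else 1

lemma cB_pm (n : ℕ) (b : Fin n → Bool) (k : ℕ) : cB n b k = 1 ∨ cB n b k = -1 := by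
  rw [cB]; split_ifs <;> simp

lemma cB_succ (n : ℕ) (b : Fin n → Bool) (i : Fin n) :
    cB n b ((i : ℕ) + 1) = if b i then 1 else -1 := by
  have h : (i : ℕ) + 1 - 1 < n := by simpa using i.isLt
  rw [cB, dif_pos h]
  have : (⟨(i : ℕ) + 1 - 1, h⟩ : Fin n) = i := by ext; simp
  rw [this]

end RWmax

open RWmax

/-- Distribution of the rightmost visited edge `M_n^+` of the simple symmetric
random walk: `P[M_n^+ = m] = 2^(-n) · C(n, ⌊(n-m)/2⌋)` (with the convention that
the binomial coefficient vanishes outside `0 ≤ k ≤ n`). -/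
theorem stmt1
    {Ω : Type*} [MeasurableSpace Ω] (P : Measure Ω) [IsProbabilityMeasure P]
    (V : ℕ → Ω → ℤ)
    (hVmeas : ∀ n, Measurable (V n))
    (hVval : ∀ n ω, V n ω = 1 ∨ V n ω = -1)
    (hVfair : ∀ n, P {ω | V n ω = 1} = 1 / 2)
    (hVindep : iIndepFun V P)
    (S : ℕ → Ω → ℤ) (hS : ∀ n ω, S n ω = ∑ k ∈ Finset.Icc 1 n, V k ω)
    (R : ℕ → Ω → ℤ) (hR : ∀ n ω, R n ω = (1 + S (n - 1) ω + S n ω) / 2)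
    (M : ℕ → Ω → ℤ)
    (hM : ∀ n ω, 1 ≤ n → IsGreatest ((fun k ↦ R k ω) '' Set.Icc 1 n) (M n ω)) :
    ∀ n : ℕ, 1 ≤ n → ∀ m : ℕ,
      P {ω | M n ω = (m : ℤ)} =
        (if n < m then 0 else (n.choose ((n - m) / 2) : ENNReal)) / 2 ^ n := by
  intro n hn m
  classical
  set E : (Fin n → Bool) → Set Ω := fun b => ⋂ k ∈ Finset.Icc 1 n, V k ⁻¹' {cB n b k}
    with hE
  have hmemE : ∀ b ω, ω ∈ E b ↔ ∀ k ∈ Finset.Icc 1 n, V k ω = cB n b k := by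
    intro b ω
    simp [hE]
  have hEmeas : ∀ b, MeasurableSet (E b) := fun b =>
    Finset.measurableSet_biInter _ fun k _ => (hVmeas k) (measurableSet_singleton _)
  -- probability of each atom
  have hhalf : ∀ (k : ℕ) (x : ℤ), x = 1 ∨ x = -1 → P (V k ⁻¹' {x}) = 1 / 2 := by
    intro k x hx
    rcases hx with rfl | rfl
    · have : V k ⁻¹' {1} = {ω | V k ω = 1} := by ext ω; simp
      rw [this, hVfair]
    · have hc : V k ⁻¹' {-1} = {ω | V k ω = 1}ᶜ := by
        ext ω
        simp only [Set.mem_preimage, Set.mem_singleton_iff, Set.mem_compl_iff, Set.mem_setOf_eq]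
        rcases hVval k ω with h | h <;> simp [h]
      have hmeas : MeasurableSet {ω | V k ω = 1} := (hVmeas k) (measurableSet_singleton 1)
      rw [hc, measure_compl hmeas (measure_ne_top P _), hVfair, measure_univ, one_div,
        ENNReal.one_sub_inv_two]
  have hPE : ∀ b, P (E b) = (1 / 2 : ENNReal) ^ n := by
    intro b
    rw [hE]
    rw [hVindep.meas_biInter (fun k _ => ⟨{cB n b k}, measurableSet_singleton _, rfl⟩)]
    rw [Finset.prod_congr rfl fun k _ => hhalf k _ (cB_pm n b k)]
    rw [Finset.prod_const, Nat.card_Icc, Nat.add_sub_cancel]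
  -- on E b, the walk data is given by b
  have hMdet : ∀ b ω, ω ∈ E b → M n ω = f (steps b) := by
    intro b ω hω
    rw [hmemE] at hω
    set w : ℕ → ℤ := fun k => V k ω with hw
    have hwv : ∀ k, 1 ≤ k → k ≤ n → w k = 1 ∨ w k = -1 := fun k _ _ => hVval k ω
    have hRw : ∀ k, 1 ≤ k → k ≤ n → R k ω = max (sFun w (k - 1)) (sFun w k) := by
      intro k h1 h2
      obtain ⟨j, rfl⟩ : ∃ j, k = j + 1 := ⟨k - 1, by omega⟩
      rw [hR, hS, hS]
      simp only [Nat.add_sub_cancel]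
      have hsf : (∑ k ∈ Finset.Icc 1 j, V k ω) = sFun w j := rfl
      have hsf2 : (∑ k ∈ Finset.Icc 1 (j+1), V k ω) = sFun w (j+1) := rfl
      rw [hsf, hsf2, sFun_succ]
      rcases hwv (j+1) h1 h2 with h | h <;> rw [h]
      · rw [max_eq_right (by omega)]; omega
      · rw [max_eq_left (by omega)]; omega
    have hG2 := isGreatest_f w n hn hwv
    have himg : ((fun k => R k ω) '' Set.Icc 1 n)
        = ((fun k => max (sFun w (k - 1)) (sFun w k)) '' Set.Icc 1 n) :=
      Set.image_congr fun k hk => hRw k hk.1 hk.2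
    have hG1 := hM n ω hn
    rw [himg] at hG1
    have hMf : M n ω = f (L w n) := hG1.unique hG2
    have hLs : L w n = steps b := by
      apply List.ext_getElem
      · simp [L, steps]
      · intro i h1 h2
        have hi : i < n := by simpa [L] using h1
        simp only [L, steps, List.getElem_map, List.getElem_range, List.getElem_ofFn]
        have hk := hω (i + 1) (Finset.mem_Icc.mpr ⟨by omega, by omega⟩)
        have hcb := cB_succ n b ⟨i, hi⟩
        simp only [Fin.val_mk] at hcb
        show w (i + 1) = _
        rw [hw]
        simp only
        rw [hk]
        exact hcb
    rw [hMf, hLs]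
  -- set decomposition
  set F : Finset (Fin n → Bool) :=
    Finset.univ.filter (fun b : Fin n → Bool => f (steps b) = (m : ℤ)) with hF
  have hset : {ω | M n ω = (m : ℤ)} = ⋃ b ∈ F, E b := by
    ext ω
    simp only [Set.mem_setOf_eq, Set.mem_iUnion, exists_prop]
    constructor
    · intro hMm
      set b : Fin n → Bool := fun i => decide (V ((i : ℕ) + 1) ω = 1) with hb
      have hωb : ω ∈ E b := by
        rw [hmemE]
        intro k hk
        rw [Finset.mem_Icc] at hk
        have hk1 : k - 1 < n := by omega
        have hkk : k - 1 + 1 = k := by omega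
        have := cB_succ n b ⟨k - 1, hk1⟩
        simp only [Fin.val_mk] at this
        rw [hkk] at this
        rw [this]
        simp only [hb, hkk]
        rcases hVval k ω with h | h <;> simp [h]
      refine ⟨b, ?_, hωb⟩
      rw [hF, Finset.mem_filter]
      exact ⟨Finset.mem_univ b, by rw [← hMdet b ω hωb]; exact hMm⟩
    · rintro ⟨b, hbF, hωb⟩
      rw [hF, Finset.mem_filter] at hbF
      rw [hMdet b ω hωb]
      exact hbF.2
  have hdisj : (↑F : Set (Fin n → Bool)).PairwiseDisjoint E := by
    intro b _ b' _ hbb'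
    refine Set.disjoint_left.mpr fun ω hω hω' => ?_
    obtain ⟨i, hi⟩ : ∃ i, b i ≠ b' i := by
      by_contra h
      push_neg at h
      exact hbb' (funext h)
    have hik : (i : ℕ) + 1 ∈ Finset.Icc 1 n := Finset.mem_Icc.mpr ⟨by omega, by omega⟩
    have h1 := (hmemE b ω).mp hω _ hik
    have h2 := (hmemE b' ω).mp hω' _ hik
    rw [cB_succ] at h1 h2
    rw [h1] at h2
    cases hbi : b i <;> cases hbi' : b' i
    · exact hi (hbi.trans hbi'.symm)
    · rw [hbi, hbi'] at h2; norm_num at h2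
    · rw [hbi, hbi'] at h2; norm_num at h2
    · exact hi (hbi.trans hbi'.symm)
  rw [hset, measure_biUnion_finset hdisj fun b _ => hEmeas b]
  rw [Finset.sum_congr rfl fun b _ => hPE b, Finset.sum_const, nsmul_eq_mul]
  have hcard : F.card = cnt n (m : ℤ) := by
    rw [hF, cnt]
  rw [hcard, main_cnt n m, tgt]
  have hpow : ∀ x : ENNReal, x * (1 / 2) ^ n = x / 2 ^ n := by
    intro x
    rw [one_div, ← ENNReal.inv_pow, ← div_eq_mul_inv]
  split_ifs with h
  · simp
  · exact hpow _
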